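/- arXiv:0809.2214 — 3 statements merged into one kernel-verified Lean document; each statement's English description precedes it below -/
import Mathlib

section
/- Let T be a relation representing R, and define the sequence T_0 = T ∪ Id and T_{n} = (T_{n-1} ∘ T^{2^{n-1}}) ∪ T_{n-1} for n ≥ 1, where T^{2^{n-1}} denotes the 2^{n-1}-fold composition of T. Then T_n = (T ∪ Id)^{2^n} for all n ≥ 0. (Correctness of the nonreflexive-composition optimization for exponential sampling.) -/
/-- `relPow R n` is the `n`-fold relational composition of `R`, with `relPow R 0 = Id`. -/
def relPow {α : Type*} (R : α → α → Prop) : ℕ → α → α → Prop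
  | 0 => Eq
  | n + 1 => fun a c => ∃ b, relPow R n a b ∧ R b c

lemma relPow_add {α : Type*} (R : α → α → Prop) (m n : ℕ) (a b : α) :
    relPow R (m + n) a b ↔ ∃ c, relPow R m a c ∧ relPow R n c b := by
  induction n generalizing b with
  | zero => simp [relPow]
  | succ n ih =>
    constructor
    · rintro ⟨c, hc, hcb⟩
      obtain ⟨d, hd, hdc⟩ := (ih _).mp hc
      exact ⟨d, hd, c, hdc, hcb⟩
    · rintro ⟨c, hc, d, hd, hdb⟩
      exact ⟨d, (ih _).mpr ⟨c, hc, hd⟩, hdb⟩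

lemma relPow_refl_iff {α : Type*} (R : α → α → Prop) (m : ℕ) (a b : α) :
    relPow (fun a b => R a b ∨ a = b) m a b ↔ ∃ k ≤ m, relPow R k a b := by
  induction m generalizing b with
  | zero =>
    simp only [relPow]
    constructor
    · rintro rfl; exact ⟨0, le_refl _, rfl⟩
    · rintro ⟨k, hk, h⟩
      interval_cases k
      exact h
  | succ m ih =>
    constructor
    · rintro ⟨c, hc, hR | rfl⟩
      · obtain ⟨k, hk, h⟩ := (ih _).mp hc
        exact ⟨k + 1, by omega, c, h, hR⟩
      · obtain ⟨k, hk, h⟩ := (ih _).mp hc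
        exact ⟨k, by omega, h⟩
    · rintro ⟨k, hk, h⟩
      rcases Nat.lt_or_ge k (m + 1) with hlt | hge
      · exact ⟨b, (ih _).mpr ⟨k, by omega, h⟩, Or.inr rfl⟩
      · have : k = m + 1 := by omega
        subst this
        obtain ⟨c, hc, hcb⟩ := h
        exact ⟨c, (ih _).mpr ⟨m, le_refl _, hc⟩, Or.inl hcb⟩

theorem stmt_7 {σ : Type*} (T : List σ → List σ → Prop)
    (S : ℕ → List σ → List σ → Prop)
    (h0 : S 0 = fun a b => T a b ∨ a = b)
    (hstep : ∀ n, S (n + 1) =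
      fun a b => (∃ c, S n a c ∧ relPow T (2 ^ n) c b) ∨ S n a b) :
    ∀ n, S n = relPow (fun a b => T a b ∨ a = b) (2 ^ n) := by
  intro n
  induction n with
  | zero =>
    rw [h0]
    funext a b
    apply propext
    rw [pow_zero]
    simp only [relPow]
    constructor
    · rintro (h | rfl)
      · exact ⟨a, rfl, Or.inl h⟩
      · exact ⟨a, rfl, Or.inr rfl⟩
    · rintro ⟨c, rfl, h | rfl⟩
      · exact Or.inl h
      · exact Or.inr rfl
  | succ n ih =>
    rw [hstep n, ih]
    funext a b
    apply propext
    have h2 : 2 ^ (n + 1) = 2 ^ n + 2 ^ n := by ring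
    simp only [relPow_refl_iff, h2]
    constructor
    · rintro (⟨c, ⟨k, hk, h⟩, hcb⟩ | ⟨k, hk, h⟩)
      · exact ⟨k + 2 ^ n, by omega, (relPow_add T k (2 ^ n) a b).mpr ⟨c, h, hcb⟩⟩
      · exact ⟨k, by omega, h⟩
    · rintro ⟨k, hk, h⟩
      rcases Nat.lt_or_ge k (2 ^ n) with hlt | hge
      · exact Or.inr ⟨k, by omega, h⟩
      · have hsplit : k = (k - 2 ^ n) + 2 ^ n := by omega
        rw [hsplit] at h
        obtain ⟨c, hc, hcb⟩ := (relPow_add T _ _ a b).mp h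
        exact Or.inl ⟨c, ⟨k - 2 ^ n, by omega, hc⟩, hcb⟩
end

section
/- If a Büchi automaton A is inherently weak — no reachable strongly connected component of its transition graph contains both a cycle visiting an accepting state and a cycle visiting no accepting state — then there exists a weak Büchi automaton (with the same transition structure but possibly modified acceptance set, making each strongly connected component uniformly accepting or rejecting) accepting the same ω-language. -/
/-- Edge relation of the transition graph of a nondeterministic automaton. -/
def nedge {α σ : Type*} (step : σ → α → Set σ) (q q' : σ) : Prop := ∃ a, q' ∈ step q a

/-- Büchi acceptance: some run visits `F` infinitely often. -/
def BuchiAccepts {α σ : Type*} (step : σ → α → Set σ) (q0 : σ) (F : Set σ)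
    (w : ℕ → α) : Prop :=
  ∃ r : ℕ → σ, r 0 = q0 ∧ (∀ n, r (n + 1) ∈ step (r n) (w n)) ∧
    ∀ N, ∃ n ≥ N, r n ∈ F

lemma freq_state {σ : Type*} [Fintype σ] (r : ℕ → σ) (S : Set σ)
    (h : ∀ N, ∃ n ≥ N, r n ∈ S) : ∃ q ∈ S, ∀ N, ∃ n ≥ N, r n = q := by
  classical
  by_contra hc
  push_neg at hc
  choose! g hg using hc
  obtain ⟨n, hn, hnS⟩ := h (Finset.univ.sup g)
  exact hg (r n) hnS n (le_trans (Finset.le_sup (Finset.mem_univ _)) hn) rfl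

lemma run_reach {α σ : Type*} (step : σ → α → Set σ) (w : ℕ → α) (r : ℕ → σ)
    (hr : ∀ n, r (n + 1) ∈ step (r n) (w n)) (m : ℕ) :
    ∀ k, Relation.ReflTransGen (nedge step) (r m) (r (m + k)) := by
  intro k; induction k with
  | zero => exact .refl
  | succ k ih => exact ih.tail ⟨w (m + k), hr (m + k)⟩

lemma run_rtg {α σ : Type*} (step : σ → α → Set σ) (w : ℕ → α) (r : ℕ → σ)
    (hr : ∀ n, r (n + 1) ∈ step (r n) (w n)) (m n : ℕ) (h : m ≤ n) :
    Relation.ReflTransGen (nedge step) (r m) (r n) := by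
  obtain ⟨k, rfl⟩ := Nat.exists_eq_add_of_le h
  exact run_reach step w r hr m k

lemma run_transgen {α σ : Type*} (step : σ → α → Set σ) (w : ℕ → α) (r : ℕ → σ)
    (hr : ∀ n, r (n + 1) ∈ step (r n) (w n)) (m n : ℕ) (h : m < n) :
    Relation.TransGen (nedge step) (r m) (r n) := by
  obtain ⟨k, rfl⟩ : ∃ k, n = m + k + 1 := ⟨n - m - 1, by omega⟩
  exact Relation.TransGen.tail' (run_reach step w r hr m k) ⟨w (m + k), hr (m + k)⟩

lemma run_transgen_avoid {α σ : Type*} (step : σ → α → Set σ) (F : Set σ) (w : ℕ → α)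
    (r : ℕ → σ) (hr : ∀ n, r (n + 1) ∈ step (r n) (w n)) (N : ℕ)
    (hN : ∀ n ≥ N, r n ∉ F) (m n : ℕ) (hm : N ≤ m) (h : m < n) :
    Relation.TransGen (fun x y => x ∉ F ∧ y ∉ F ∧ nedge step x y) (r m) (r n) := by
  obtain ⟨k, rfl⟩ : ∃ k, n = m + k + 1 := ⟨n - m - 1, by omega⟩
  clear h
  induction k with
  | zero => exact .single ⟨hN m hm, hN (m + 1) (by omega), w m, hr m⟩
  | succ k ih =>
      exact ih.tail ⟨hN (m + k + 1) (by omega), hN (m + k + 2) (by omega),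
        w (m + k + 1), hr (m + k + 1)⟩

/-- If a Büchi automaton is inherently weak — no reachable strongly connected
component contains both an accepting cycle and a cycle avoiding all accepting
states — then some weak acceptance set `F'` (constant on each strongly connected
component) yields the same ω-language with the same transition structure. -/
theorem stmt_15 {α σ : Type*} [Fintype σ] (step : σ → α → Set σ) (q0 : σ) (F : Set σ)
    (hinw : ¬ ∃ q, Relation.ReflTransGen (nedge step) q0 q ∧
      (∃ p, Relation.ReflTransGen (nedge step) q p ∧
        Relation.ReflTransGen (nedge step) p q ∧
        p ∈ F ∧ Relation.TransGen (nedge step) p p) ∧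
      (∃ p, Relation.ReflTransGen (nedge step) q p ∧
        Relation.ReflTransGen (nedge step) p q ∧
        p ∉ F ∧ Relation.TransGen (fun x y => x ∉ F ∧ y ∉ F ∧ nedge step x y) p p)) :
    ∃ F' : Set σ,
      (∀ q q', Relation.ReflTransGen (nedge step) q q' →
        Relation.ReflTransGen (nedge step) q' q → (q ∈ F' ↔ q' ∈ F'))
      ∧ ∀ w, BuchiAccepts step q0 F w ↔ BuchiAccepts step q0 F' w := by
  classical
  refine ⟨{q | ∃ p, Relation.ReflTransGen (nedge step) q p ∧
      Relation.ReflTransGen (nedge step) p q ∧ p ∈ F ∧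
      Relation.TransGen (nedge step) p p}, ?_, ?_⟩
  · intro q q' h1 h2
    constructor
    · rintro ⟨p, hqp, hpq, hpF, hpc⟩
      exact ⟨p, h2.trans hqp, hpq.trans h1, hpF, hpc⟩
    · rintro ⟨p, hqp, hpq, hpF, hpc⟩
      exact ⟨p, h1.trans hqp, hpq.trans h2, hpF, hpc⟩
  · intro w
    constructor
    · rintro ⟨r, hr0, hrs, hrF⟩
      obtain ⟨q, hqF, hq⟩ := freq_state r F hrF
      refine ⟨r, hr0, hrs, fun N => ?_⟩
      obtain ⟨n1, hn1, he1⟩ := hq N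
      obtain ⟨n2, hn2, he2⟩ := hq (n1 + 1)
      have hc := run_transgen step w r hrs n1 n2 (by omega)
      rw [he1, he2] at hc
      exact ⟨n1, hn1, by rw [he1]; exact ⟨q, .refl, .refl, hqF, hc⟩⟩
    · rintro ⟨r, hr0, hrs, hrF'⟩
      refine ⟨r, hr0, hrs, ?_⟩
      by_contra hc
      push_neg at hc
      obtain ⟨N, hN⟩ := hc
      obtain ⟨q, hqF', hq⟩ := freq_state r _ hrF'
      obtain ⟨n1, hn1, he1⟩ := hq N
      obtain ⟨n2, hn2, he2⟩ := hq (n1 + 1)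
      have hreach := run_rtg step w r hrs 0 n1 (Nat.zero_le _)
      rw [hr0, he1] at hreach
      have hcyc := run_transgen_avoid step F w r hrs N hN n1 n2 hn1 (by omega)
      rw [he1, he2] at hcyc
      exact hinw ⟨q, hreach, hqF', q, .refl, .refl, he1 ▸ hN n1 hn1, hcyc⟩
end

section
/- Let A^{e_0} be the last automaton of an incrementally growing sequence with increments Q_{I_0},...,Q_{I_{k-1}} that are pairwise communication equivalent, and let A^{e_*} be obtained by the finite-word extrapolation construction: for each state q in Q_H ∪ Q_{I_0} and letter a, if δ(q,a) lands in increment Q_{I_j} with 1 ≤ j ≤ k−1, add for every 0 ≤ ℓ < j a transition on a from q to the state corresponding (under the increment isomorphism) to δ(q,a) in Q_{I_ℓ}. Then L(A^{e_*}) = ⋃_{i≥0} L(A^{e_i}), where A^{e_i} is the automaton obtained from A^{e_0} by inserting i additional copies of the increment (each communication equivalent to Q_{I_0}) between the head part and Q_{I_0}. -/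
/-!  Abstract model of an incrementally growing family of deterministic
(partial) automata and of the finite-word extrapolation construction.

States of each automaton are partitioned into a head part `H`, a number of
isomorphic copies of an increment `I` (indexed by their distance `ℓ` from the
head part), and a tail-end part `T`.  All increment copies are communication
equivalent: their outgoing transitions are given uniformly by `δI`, which for
each increment state and letter is undefined, or goes `γ` increments further
down (to a corresponding state, `γ = 0` meaning within the same increment), or
goes to a fixed tail-end state.  The head part is communication stable: its
transitions `δH` stay in the head, or go to the increment of a fixed index `j`,
or to the tail end; tail-end transitions `δT` stay in the tail end. -/

/-- States of an automaton of the family: head, `(index, increment-state)`, or tail. -/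
abbrev IncSt (H I T : Type) := H ⊕ (ℕ × I) ⊕ T

/-- The (partial, deterministic) transition function of the automaton `A^{e_i}`
having `m` increments. -/
def incStep {A H I T : Type} (δH : H → A → Option (IncSt H I T))
    (δI : I → A → Option ((ℕ × I) ⊕ T)) (δT : T → A → Option T) (m : ℕ) :
    IncSt H I T → A → Option (IncSt H I T)
  | Sum.inl h, a =>
      match δH h a with
      | none => none
      | some (Sum.inl h') => some (Sum.inl h')
      | some (Sum.inr (Sum.inl (j, x))) =>
          if j < m then some (Sum.inr (Sum.inl (j, x))) else none
      | some (Sum.inr (Sum.inr t)) => some (Sum.inr (Sum.inr t))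
  | Sum.inr (Sum.inl (ℓ, x)), a =>
      match δI x a with
      | none => none
      | some (Sum.inl (γ, y)) =>
          if ℓ + γ < m then some (Sum.inr (Sum.inl (ℓ + γ, y))) else none
      | some (Sum.inr t) => some (Sum.inr (Sum.inr t))
  | Sum.inr (Sum.inr t), a => (δT t a).map (fun t' => Sum.inr (Sum.inr t'))

/-- Deterministic partial evaluation of a word. -/
def evalD {A S : Type} (step : S → A → Option S) : S → List A → Option S
  | s, [] => some s
  | s, a :: w =>
      match step s a with
      | none => none
      | some s' => evalD step s' w

/-- Acceptance condition: accepting states are uniform over increment copies. -/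
def incAccept {H I T : Type} (FH : Set H) (FI : Set I) (FT : Set T) :
    IncSt H I T → Prop
  | Sum.inl h => h ∈ FH
  | Sum.inr (Sum.inl (_, x)) => x ∈ FI
  | Sum.inr (Sum.inr t) => t ∈ FT

/-- Language of the automaton `A^{e_i}`, obtained from `A^{e_0}` (which has `k`
increments) by inserting `i` additional communication-equivalent copies of the
increment between the head part and `Q_{I_0}`. -/
def incLang {A H I T : Type} (δH : H → A → Option (IncSt H I T))
    (δI : I → A → Option ((ℕ × I) ⊕ T)) (δT : T → A → Option T)
    (FH : Set H) (FI : Set I) (FT : Set T) (h0 : H) (m : ℕ) : Set (List A) :=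
  {w | ∃ s, evalD (incStep δH δI δT m) (Sum.inl h0) w = some s ∧ incAccept FH FI FT s}

/-- The (nondeterministic) transition relation of the extrapolated automaton
`A^{e_*}`: all transitions of `A^{e_0}` (with its `k` increments), plus, for
every state `q` of `Q_H ∪ Q_{I_0}` and letter `a` such that `δ(q,a)` lands in
increment `Q_{I_j}` with `1 ≤ j ≤ k - 1`, a transition from `q` on `a` to the
corresponding state of `Q_{I_ℓ}` for every `0 ≤ ℓ < j`. -/
def starStep {A H I T : Type} (δH : H → A → Option (IncSt H I T))
    (δI : I → A → Option ((ℕ × I) ⊕ T)) (δT : T → A → Option T) (k : ℕ) :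
    IncSt H I T → A → Set (IncSt H I T) :=
  fun s a =>
    {s' | incStep δH δI δT k s a = some s'} ∪
      match s with
      | Sum.inl h =>
          {s' | ∃ j x, δH h a = some (Sum.inr (Sum.inl (j, x))) ∧ 1 ≤ j ∧ j < k ∧
            ∃ ℓ < j, s' = Sum.inr (Sum.inl (ℓ, x))}
      | Sum.inr (Sum.inl (0, x)) =>
          {s' | ∃ γ y, δI x a = some (Sum.inl (γ, y)) ∧ 1 ≤ γ ∧ γ < k ∧
            ∃ ℓ < γ, s' = Sum.inr (Sum.inl (ℓ, y))}
      | _ => ∅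

/-- Nondeterministic evaluation. -/
def evalN {A S : Type} (step : S → A → Set S) : S → List A → Set S
  | s, [] => {s}
  | s, a :: w => ⋃ s' ∈ step s a, evalN step s' w

section ExtrapProofs

variable {A H I T : Type} {δH : H → A → Option (IncSt H I T)}
    {δI : I → A → Option ((ℕ × I) ⊕ T)} {δT : T → A → Option T}
    {FH : Set H} {FI : Set I} {FT : Set T}

/-- Monotonicity of the deterministic step in the number of increments. -/
lemma incStep_mono {m m' : ℕ} (hm : m ≤ m') {s s₁ : IncSt H I T} {a : A}
    (h : incStep δH δI δT m s a = some s₁) : incStep δH δI δT m' s a = some s₁ := by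
  rcases s with h0 | ⟨⟨ℓ, x⟩⟩ | t
  · rcases hh : δH h0 a with _ | (h' | ⟨j, x⟩ | t) <;>
      simp only [incStep, hh] at h ⊢ <;> try exact h
    split at h
    · rw [if_pos (by omega)]; exact h
    · exact absurd h (by simp)
  · rcases hh : δI x a with _ | (⟨γ, y⟩ | t) <;>
      simp only [incStep, hh] at h ⊢ <;> try exact h
    split at h
    · rw [if_pos (by omega)]; exact h
    · exact absurd h (by simp)
  · exact h

lemma evalD_mono {m m' : ℕ} (hm : m ≤ m') :
    ∀ {w : List A} {s f : IncSt H I T},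
      evalD (incStep δH δI δT m) s w = some f →
      evalD (incStep δH δI δT m') s w = some f := by
  intro w
  induction w with
  | nil => intro s f h; exact h
  | cons a w ih =>
      intro s f h
      simp only [evalD] at h ⊢
      rcases hs : incStep δH δI δT m s a with _ | s₁
      · rw [hs] at h; exact absurd h (by simp)
      · rw [hs] at h
        rw [incStep_mono hm hs]
        exact ih h

/-- Simulation relation used for the `⊆` direction: the star state may sit in
an increment copy with a smaller index. -/
def extRel {H I T : Type} : IncSt H I T → IncSt H I T → Prop
  | Sum.inl h, Sum.inl h' => h' = h
  | Sum.inr (Sum.inl (ℓ', x)), Sum.inr (Sum.inl (ℓ, y)) => y = x ∧ ℓ' ≤ ℓ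
  | Sum.inr (Sum.inr t), Sum.inr (Sum.inr t') => t' = t
  | _, _ => False

lemma extRel_refl (s : IncSt H I T) : extRel s s := by
  rcases s with h | ⟨⟨ℓ, x⟩⟩ | t <;> simp [extRel]

lemma extRel_accept {s' s : IncSt H I T} (hr : extRel s' s)
    (h : incAccept FH FI FT s') : incAccept FH FI FT s := by
  rcases s' with h1 | ⟨⟨ℓ', x⟩⟩ | t1 <;> rcases s with h2 | ⟨⟨ℓ, y⟩⟩ | t2 <;>
    simp [extRel] at hr <;> simp_all [incAccept]

lemma starAut_sub (k : ℕ) (hk : 1 ≤ k)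
    (hδH : ∀ h a j x, δH h a = some (Sum.inr (Sum.inl (j, x))) → j < k)
    (hδI : ∀ x a γ y, δI x a = some (Sum.inl (γ, y)) → γ < k) :
    ∀ (w : List A) (s' s : IncSt H I T), extRel s' s →
    (∃ f ∈ evalN (starStep δH δI δT k) s' w, incAccept FH FI FT f) →
    ∃ m f, evalD (incStep δH δI δT m) s w = some f ∧ incAccept FH FI FT f := by
  intro w
  induction w with
  | nil =>
      rintro s' s hr ⟨f, hf, hacc⟩
      simp only [evalN, Set.mem_singleton_iff] at hf
      subst hf
      exact ⟨k, s, rfl, extRel_accept hr hacc⟩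
  | cons a w ih =>
      rintro s' s hr ⟨f, hf, hacc⟩
      simp only [evalN, Set.mem_iUnion] at hf
      obtain ⟨s₁, hs₁, hf⟩ := hf
      -- produce a matching deterministic successor of `s`
      have key : ∃ s₂ C, extRel s₁ s₂ ∧
          ∀ m, C ≤ m → incStep δH δI δT m s a = some s₂ := by
        rcases hs₁ with hdet | hnd
        · -- deterministic step of `A^{e_0}`
          simp only [Set.mem_setOf_eq] at hdet
          rcases s' with h1 | ⟨⟨ℓ', x⟩⟩ | t1 <;> rcases s with h2 | ⟨⟨ℓ, y⟩⟩ | t2 <;>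
            simp only [extRel] at hr
          · -- head / head : identical states
            subst hr
            exact ⟨s₁, k, extRel_refl s₁, fun m hm => incStep_mono hm hdet⟩
          · -- increment / increment
            obtain ⟨rfl, hle⟩ := hr
            rcases hh : δI y a with _ | (⟨γ, z⟩ | t) <;>
              simp only [incStep, hh] at hdet
            · exact absurd hdet (by simp)
            · split at hdet
              · cases hdet
                refine ⟨Sum.inr (Sum.inl (ℓ + γ, z)), ℓ + γ + 1, ⟨rfl, by omega⟩, ?_⟩
                intro m hm
                simp only [incStep, hh]
                rw [if_pos (by omega)]
              · exact absurd hdet (by simp)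
            · cases hdet
              refine ⟨Sum.inr (Sum.inr t), 0, extRel_refl _, ?_⟩
              intro m _
              simp only [incStep, hh]
          · -- tail / tail : identical states
            subst hr
            exact ⟨s₁, k, extRel_refl s₁, fun m hm => incStep_mono hm hdet⟩
        · -- nondeterministic shortcut
          rcases s' with h1 | ⟨⟨ℓ', x⟩⟩ | t1
          · simp only [starStep, Set.mem_setOf_eq] at hnd
            obtain ⟨j, z, hδ, h1j, hjk, ℓ₀, hℓ₀, rfl⟩ := hnd
            rcases s with h2 | ⟨⟨ℓ, y⟩⟩ | t2 <;> simp only [extRel] at hr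
            subst hr
            refine ⟨Sum.inr (Sum.inl (j, z)), j + 1, ⟨rfl, by omega⟩, ?_⟩
            intro m hm
            simp only [incStep, hδ]
            rw [if_pos (by omega)]
          · rcases ℓ' with _ | ℓ'
            · simp only [starStep, Set.mem_setOf_eq] at hnd
              obtain ⟨γ, z, hδ, h1γ, hγk, ℓ₀, hℓ₀, rfl⟩ := hnd
              rcases s with h2 | ⟨⟨ℓ, y⟩⟩ | t2 <;> simp only [extRel] at hr
              obtain ⟨rfl, hle⟩ := hr
              refine ⟨Sum.inr (Sum.inl (ℓ + γ, z)), ℓ + γ + 1, ⟨rfl, by omega⟩, ?_⟩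
              intro m hm
              simp only [incStep, hδ]
              rw [if_pos (by omega)]
            · exact absurd hnd (by simp [starStep])
          · exact absurd hnd (by simp [starStep])
      obtain ⟨s₂, C, hr₂, hstep⟩ := key
      obtain ⟨m, f₂, hrun, hacc₂⟩ := ih s₁ s₂ hr₂ ⟨f, hf, hacc⟩
      refine ⟨max m C, f₂, ?_, hacc₂⟩
      simp only [evalD, hstep (max m C) (le_max_right _ _)]
      exact evalD_mono (le_max_left _ _) hrun

/-- Projection used for the `⊇` direction: collapse the first `D` extra
increments onto the first increment of `A^{e_0}`. -/
def projSt {H I T : Type} (D : ℕ) : IncSt H I T → IncSt H I T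
  | Sum.inl h => Sum.inl h
  | Sum.inr (Sum.inl (ℓ, x)) => Sum.inr (Sum.inl (ℓ - D, x))
  | Sum.inr (Sum.inr t) => Sum.inr (Sum.inr t)

lemma projSt_accept (D : ℕ) {s : IncSt H I T} (h : incAccept FH FI FT s) :
    incAccept FH FI FT (projSt D s) := by
  rcases s with h1 | ⟨⟨ℓ, x⟩⟩ | t <;> simpa [projSt, incAccept] using h

lemma projSt_step (k D : ℕ)
    (hδH : ∀ h a j x, δH h a = some (Sum.inr (Sum.inl (j, x))) → j < k)
    (hδI : ∀ x a γ y, δI x a = some (Sum.inl (γ, y)) → γ < k)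
    {s s₁ : IncSt H I T} {a : A}
    (h : incStep δH δI δT (k + D) s a = some s₁) :
    projSt D s₁ ∈ starStep δH δI δT k (projSt D s) a := by
  rcases s with h0 | ⟨⟨ℓ, x⟩⟩ | t
  · rcases hh : δH h0 a with _ | (h' | ⟨j, z⟩ | t) <;>
      simp only [incStep, hh] at h
    · exact absurd h (by simp)
    · cases h
      exact Or.inl (by simp [incStep, hh, projSt])
    · split at h
      · cases h
        have hjk : j < k := hδH _ _ _ _ hh
        by_cases hj : j - D = j
        · refine Or.inl ?_
          simp only [projSt, Set.mem_setOf_eq, incStep, hh]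
          rw [hj, if_pos hjk]
        · refine Or.inr ?_
          simp only [projSt, starStep, Set.mem_setOf_eq]
          exact ⟨j, z, hh, by omega, hjk, j - D, by omega, rfl⟩
      · exact absurd h (by simp)
    · cases h
      exact Or.inl (by simp [incStep, hh, projSt])
  · rcases hh : δI x a with _ | (⟨γ, z⟩ | t) <;>
      simp only [incStep, hh] at h
    · exact absurd h (by simp)
    · split at h
      · cases h
        rename_i hlt
        have hγk : γ < k := hδI _ _ _ _ hh
        by_cases hc : (ℓ + γ) - D = (ℓ - D) + γ
        · refine Or.inl ?_
          simp only [projSt, Set.mem_setOf_eq, incStep, hh]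
          rw [if_pos (by omega), hc]
        · have hℓD : ℓ - D = 0 := by omega
          have hlt' : (ℓ + γ) - D < γ := by omega
          refine Or.inr ?_
          simp only [projSt]
          rw [hℓD]
          exact ⟨γ, z, hh, by omega, hγk, (ℓ + γ) - D, hlt', rfl⟩
      · exact absurd h (by simp)
    · cases h
      exact Or.inl (by simp [incStep, hh, projSt])
  · rcases hh : δT t a with _ | t'
    · simp [incStep, hh] at h
    · simp only [incStep, hh, Option.map_some] at h
      cases h
      exact Or.inl (by simp [incStep, hh, projSt])

lemma starAut_sup (k D : ℕ)
    (hδH : ∀ h a j x, δH h a = some (Sum.inr (Sum.inl (j, x))) → j < k)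
    (hδI : ∀ x a γ y, δI x a = some (Sum.inl (γ, y)) → γ < k) :
    ∀ (w : List A) (s f : IncSt H I T),
      evalD (incStep δH δI δT (k + D)) s w = some f → incAccept FH FI FT f →
      ∃ f' ∈ evalN (starStep δH δI δT k) (projSt D s) w, incAccept FH FI FT f' := by
  intro w
  induction w with
  | nil =>
      intro s f h hacc
      simp only [evalD] at h
      cases h
      exact ⟨projSt D s, by simp [evalN], projSt_accept D hacc⟩
  | cons a w ih =>
      intro s f h hacc
      simp only [evalD] at h
      rcases hs : incStep δH δI δT (k + D) s a with _ | s₁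
      · rw [hs] at h; exact absurd h (by simp)
      · rw [hs] at h
        obtain ⟨f', hf', hacc'⟩ := ih s₁ f h hacc
        refine ⟨f', ?_, hacc'⟩
        simp only [evalN, Set.mem_iUnion]
        exact ⟨projSt D s₁, projSt_step k D hδH hδI hs, hf'⟩

end ExtrapProofs

/-- The extrapolated automaton accepts exactly the union of the languages of
the automata `A^{e_i}` of the extrapolated sequence. -/
theorem stmt_19 {A H I T : Type}
    (δH : H → A → Option (IncSt H I T))
    (δI : I → A → Option ((ℕ × I) ⊕ T)) (δT : T → A → Option T)
    (FH : Set H) (FI : Set I) (FT : Set T) (h0 : H) (k : ℕ) (hk : 1 ≤ k)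
    -- well-formedness of `A^{e_0}`: head transitions and increment offsets fit
    -- within its `k` increments
    (hδH : ∀ h a j x, δH h a = some (Sum.inr (Sum.inl (j, x))) → j < k)
    (hδI : ∀ x a γ y, δI x a = some (Sum.inl (γ, y)) → γ < k) :
    {w | ∃ s ∈ evalN (starStep δH δI δT k) (Sum.inl h0) w, incAccept FH FI FT s}
      = ⋃ i : ℕ, incLang δH δI δT FH FI FT h0 (k + i) := by

  ext w
  simp only [Set.mem_setOf_eq, Set.mem_iUnion]
  constructor
  · rintro ⟨f, hf, hacc⟩
    obtain ⟨m, f₂, hrun, hacc₂⟩ :=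
      starAut_sub k hk hδH hδI w (Sum.inl h0) (Sum.inl h0) (extRel_refl _) ⟨f, hf, hacc⟩
    exact ⟨m, f₂, evalD_mono (by omega) hrun, hacc₂⟩
  · rintro ⟨i, f, hrun, hacc⟩
    exact starAut_sup k i hδH hδI w (Sum.inl h0) f hrun hacc
end
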